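/- Fix $N \ge 1$, $\mu \ge 2$, nonempty finite sets $D_s$ for $s \le N$ (with $D_s = \{1\}$ a singleton for $s \le 0$), and reals $y_{s,\eta}$ indexed by $s \in \{1,\dots,N\}$ and $\eta \in D_{s-\mu+1} \times \cdots \times D_s$. There exist real numbers $z_{s,\eta}$ indexed by $s \in \{1,\dots,N\}$ and $\eta \in D_{s-\mu+1} \times \cdots \times D_{s-1}$ satisfying (i) $z_{N,(\xi_{N-\mu+1},\dots,\xi_{N-1})} \ge y_{N,(\xi_{N-\mu+1},\dots,\xi_N)}$ for all $\xi_N \in D_N$, (ii) $z_{s,(\xi_{s-\mu+1},\dots,\xi_{s-1})} \ge y_{s,(\xi_{s-\mu+1},\dots,\xi_s)} + z_{s+1,(\xi_{s-\mu+2},\dots,\xi_s)}$ for $1 \le s \le N-1$ and all admissible indices, and (iii) $z_{1,(\xi_{2-\mu},\dots,\xi_0)} \le 0$, if and only if $\sum_{s=1}^N y_{s,(\xi_{s-\mu+1},\dots,\xi_s)} \le 0$ for every trajectory $(\xi_1,\dots,\xi_N) \in D_1 \times \cdots \times D_N$ (where $\xi_s = 1$ for $s \le 0$). -/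

import Mathlib

/-- Auxiliary tail sum from stage `t` to `N` along a trajectory `ξ`. -/
noncomputable def stmt4Wsum (N μ : ℕ) (D : ℤ → Type)
    (y : (t : ℤ) → ((j : Fin μ) → D (t - μ + 1 + (j.1 : ℤ))) → ℝ)
    (t : ℤ) (ξ : ∀ s : ℤ, D s) : ℝ :=
  ∑ s ∈ Finset.Icc t (N : ℤ), y s (fun j => ξ (s - μ + 1 + (j.1 : ℤ)))

/-- Set of attainable tail sums over trajectories extending the window `η`. -/
def stmt4Aset (N μ : ℕ) (D : ℤ → Type)
    (y : (t : ℤ) → ((j : Fin μ) → D (t - μ + 1 + (j.1 : ℤ))) → ℝ)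
    (t : ℤ) (η : (j : Fin (μ - 1)) → D (t - μ + 1 + (j.1 : ℤ))) : Set ℝ :=
  { r | ∃ ξ : ∀ s : ℤ, D s,
      (∀ j : Fin (μ - 1), ξ (t - μ + 1 + (j.1 : ℤ)) = η j) ∧
      r = stmt4Wsum N μ D y t ξ }

lemma stmt4Wsum_congr (N μ : ℕ) (D : ℤ → Type)
    (y : (t : ℤ) → ((j : Fin μ) → D (t - μ + 1 + (j.1 : ℤ))) → ℝ)
    (t : ℤ) (ξ ξ' : ∀ s, D s)
    (h : ∀ p : ℤ, t - μ + 1 ≤ p → p ≤ N → ξ p = ξ' p) :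
    stmt4Wsum N μ D y t ξ = stmt4Wsum N μ D y t ξ' := by
  refine Finset.sum_congr rfl fun s hs => ?_
  have hs' := Finset.mem_Icc.mp hs
  have : (fun j : Fin μ => ξ (s - μ + 1 + (j.1 : ℤ)))
      = (fun j : Fin μ => ξ' (s - μ + 1 + (j.1 : ℤ))) := by
    funext j
    exact h _ (by omega) (by have := j.2; omega)
  rw [this]

lemma stmt4Aset_bdd (N μ : ℕ) (D : ℤ → Type) [∀ s, Fintype (D s)] [∀ s, Nonempty (D s)]
    (y : (t : ℤ) → ((j : Fin μ) → D (t - μ + 1 + (j.1 : ℤ))) → ℝ)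
    (t : ℤ) (η : (j : Fin (μ - 1)) → D (t - μ + 1 + (j.1 : ℤ))) :
    BddAbove (stmt4Aset N μ D y t η) := by
  classical
  set F : (∀ s : (Finset.Icc (t - (μ : ℤ) + 1) (N : ℤ) : Finset ℤ), D s) → ℝ :=
    fun g => stmt4Wsum N μ D y t
      (fun p => if h : p ∈ Finset.Icc (t - (μ : ℤ) + 1) (N : ℤ) then g ⟨p, h⟩
        else Classical.arbitrary (D p)) with hF
  refine BddAbove.mono ?_ (Set.finite_range F).bddAbove
  rintro r ⟨ξ, -, rfl⟩
  refine ⟨fun s => ξ s.1, ?_⟩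
  rw [hF]
  refine stmt4Wsum_congr N μ D y t _ ξ fun p hp1 hp2 => ?_
  have hmem : p ∈ Finset.Icc (t - (μ : ℤ) + 1) (N : ℤ) := Finset.mem_Icc.mpr ⟨hp1, hp2⟩
  simp [hmem]

lemma stmt4_split (N μ : ℕ) (D : ℤ → Type)
    (y : (t : ℤ) → ((j : Fin μ) → D (t - μ + 1 + (j.1 : ℤ))) → ℝ)
    (t : ℤ) (ht : t ≤ (N : ℤ)) (ξ : ∀ s, D s) :
    stmt4Wsum N μ D y t ξ
      = y t (fun j => ξ (t - μ + 1 + (j.1 : ℤ))) + stmt4Wsum N μ D y (t + 1) ξ := by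
  unfold stmt4Wsum
  rw [show Finset.Icc t (N : ℤ) = insert t (Finset.Icc (t + 1) (N : ℤ)) by
      ext p; simp only [Finset.mem_Icc, Finset.mem_insert]; omega,
    Finset.sum_insert (by simp only [Finset.mem_Icc]; omega)]

/-- Exactness of the backward dynamic-programming polyhedral representation
for memory depth `μ ≥ 2`: the linear system (i)-(iii) in the auxiliary variables
`z t η` (indexed by `(μ-1)`-windows) is feasible iff all trajectory sums of the
window-indexed terms `y` are nonpositive.  Stages run over `1,…,N`; sets `D s` with
`s ≤ 0` are singletons. -/
theorem stmt_4 (N : ℕ) (hN : 1 ≤ N) (μ : ℕ) (hμ : 2 ≤ μ)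
    (D : ℤ → Type) [∀ s, Fintype (D s)] [∀ s, Nonempty (D s)]
    (hsing : ∀ s : ℤ, s ≤ 0 → Subsingleton (D s))
    (y : (t : ℤ) → ((j : Fin μ) → D (t - μ + 1 + (j.1 : ℤ))) → ℝ) :
    (∃ z : (t : ℤ) → ((j : Fin (μ - 1)) → D (t - μ + 1 + (j.1 : ℤ))) → ℝ,
        (∀ ξ : ∀ s : ℤ, D s,
            y N (fun j => ξ ((N : ℤ) - μ + 1 + (j.1 : ℤ)))
              ≤ z N (fun j => ξ ((N : ℤ) - μ + 1 + (j.1 : ℤ)))) ∧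
        (∀ t : ℤ, 1 ≤ t → t ≤ (N : ℤ) - 1 → ∀ ξ : ∀ s : ℤ, D s,
            y t (fun j => ξ (t - μ + 1 + (j.1 : ℤ)))
              + z (t + 1) (fun j => ξ (t + 1 - μ + 1 + (j.1 : ℤ)))
              ≤ z t (fun j => ξ (t - μ + 1 + (j.1 : ℤ)))) ∧
        (∀ ξ : ∀ s : ℤ, D s, z 1 (fun j => ξ (1 - μ + 1 + (j.1 : ℤ))) ≤ 0))
    ↔ (∀ ξ : ∀ s : ℤ, D s,
        ∑ t ∈ Finset.Icc (1 : ℤ) N, y t (fun j => ξ (t - μ + 1 + (j.1 : ℤ))) ≤ 0) := by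
  classical
  constructor
  · rintro ⟨z, h1, h2, h3⟩ ξ
    have key : ∀ n : ℕ, ∀ t : ℤ, t = (N : ℤ) - n → 1 ≤ t →
        stmt4Wsum N μ D y t ξ ≤ z t (fun j => ξ (t - μ + 1 + (j.1 : ℤ))) := by
      intro n
      induction n with
      | zero =>
        intro t ht _
        have htN : t = (N : ℤ) := by omega
        subst htN
        unfold stmt4Wsum
        rw [Finset.Icc_self, Finset.sum_singleton]
        exact h1 ξ
      | succ n ih =>
        intro t ht h1t
        have htN : t ≤ (N : ℤ) - 1 := by omega
        rw [stmt4_split N μ D y t (by omega) ξ]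
        have hih := ih (t + 1) (by omega) (by omega)
        have h2' := h2 t h1t htN ξ
        linarith
    have h1le : (1 : ℤ) = (N : ℤ) - ((N - 1 : ℕ) : ℤ) := by omega
    have := (key (N - 1) 1 h1le le_rfl).trans (h3 ξ)
    exact this
  · intro hall
    refine ⟨fun t η => sSup (stmt4Aset N μ D y t η), ?_, ?_, ?_⟩
    · intro ξ
      have hmem : stmt4Wsum N μ D y N ξ
          ∈ stmt4Aset N μ D y N (fun j => ξ ((N : ℤ) - μ + 1 + (j.1 : ℤ))) :=
        ⟨ξ, fun j => rfl, rfl⟩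
      have heq : stmt4Wsum N μ D y N ξ
          = y N (fun j => ξ ((N : ℤ) - μ + 1 + (j.1 : ℤ))) := by
        unfold stmt4Wsum
        rw [Finset.Icc_self, Finset.sum_singleton]
      calc y N (fun j => ξ ((N : ℤ) - μ + 1 + (j.1 : ℤ)))
          = stmt4Wsum N μ D y N ξ := heq.symm
        _ ≤ _ := le_csSup (stmt4Aset_bdd N μ D y N _) hmem
    · intro t h1t htN ξ
      have hne : (stmt4Aset N μ D y (t + 1)
          (fun j => ξ (t + 1 - μ + 1 + (j.1 : ℤ)))).Nonempty :=
        ⟨stmt4Wsum N μ D y (t + 1) ξ, ξ, fun j => rfl, rfl⟩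
      have hub : ∀ r ∈ stmt4Aset N μ D y (t + 1)
          (fun j => ξ (t + 1 - μ + 1 + (j.1 : ℤ))),
          y t (fun j => ξ (t - μ + 1 + (j.1 : ℤ))) + r
            ≤ sSup (stmt4Aset N μ D y t (fun j => ξ (t - μ + 1 + (j.1 : ℤ)))) := by
        rintro r ⟨ξ', hag, rfl⟩
        set ξ'' : ∀ s : ℤ, D s :=
          Function.update ξ' (t - (μ : ℤ) + 1) (ξ (t - (μ : ℤ) + 1)) with hξ''
        have hupd : ∀ p : ℤ, t - (μ : ℤ) + 1 ≤ p → p ≤ t → ξ'' p = ξ p := by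
          intro p hp1 hp2
          rcases eq_or_ne p (t - (μ : ℤ) + 1) with h | h
          · subst h
            rw [hξ'']
            exact Function.update_self _ _ _
          · rw [hξ'', Function.update_of_ne h]
            have hklt : (p - (t + 1 - (μ : ℤ) + 1)).toNat < μ - 1 := by omega
            have hthis := hag ⟨(p - (t + 1 - (μ : ℤ) + 1)).toNat, hklt⟩
            have hp : t + 1 - (μ : ℤ) + 1
                + (((p - (t + 1 - (μ : ℤ) + 1)).toNat : ℤ)) = p := by omega
            simp only [Fin.val_mk] at hthis
            rw [hp] at hthis
            exact hthis
        have e1 : stmt4Wsum N μ D y (t + 1) ξ'' = stmt4Wsum N μ D y (t + 1) ξ' := by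
          refine stmt4Wsum_congr N μ D y (t + 1) _ _ fun p hp1 hp2 => ?_
          rw [hξ'', Function.update_of_ne (by omega)]
        have e2 : (fun j : Fin μ => ξ'' (t - (μ : ℤ) + 1 + (j.1 : ℤ)))
            = (fun j : Fin μ => ξ (t - (μ : ℤ) + 1 + (j.1 : ℤ))) := by
          funext j
          exact hupd _ (by omega) (by have := j.2; omega)
        have hmem : y t (fun j => ξ (t - μ + 1 + (j.1 : ℤ))) + stmt4Wsum N μ D y (t + 1) ξ'
            ∈ stmt4Aset N μ D y t (fun j => ξ (t - μ + 1 + (j.1 : ℤ))) := by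
          refine ⟨ξ'', fun j => hupd _ (by omega) (by have := j.2; omega), ?_⟩
          rw [stmt4_split N μ D y t (by omega) ξ'', e1, e2]
        exact le_csSup (stmt4Aset_bdd N μ D y t _) hmem
      have hle : sSup (stmt4Aset N μ D y (t + 1)
            (fun j => ξ (t + 1 - μ + 1 + (j.1 : ℤ))))
          ≤ sSup (stmt4Aset N μ D y t (fun j => ξ (t - μ + 1 + (j.1 : ℤ))))
            - y t (fun j => ξ (t - μ + 1 + (j.1 : ℤ))) :=
        csSup_le hne fun r hr => by linarith [hub r hr]
      linarith
    · intro ξ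
      refine csSup_le ⟨stmt4Wsum N μ D y 1 ξ, ξ, fun j => rfl, rfl⟩ ?_
      rintro r ⟨ξ', -, rfl⟩
      exact hall ξ'
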